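/- Let L > 0 and α > 0 be real, and define P_out(ξ) = (γ(L, ξ) − ξ^{−2/α} γ(L + 2/α, ξ)) / Γ(L) for ξ > 0. Then (1 − P_out(ξ)) · ξ^{2/α} tends to Γ(L + 2/α)/Γ(L) as ξ → ∞. -/

import Mathlib

open Real Filter Topology

/-- The lower incomplete Gamma function `γ(s, x) = ∫_0^x t^{s−1} e^{−t} dt`. -/
noncomputable def lowerIncompleteGamma (s x : ℝ) : ℝ :=
  ∫ t in (0:ℝ)..x, t ^ (s - 1) * Real.exp (-t)

/-- The computation-outage probability of Lemma 1. -/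
noncomputable def Pout (L α ξ : ℝ) : ℝ :=
  (lowerIncompleteGamma L ξ - ξ ^ (-(2 / α)) * lowerIncompleteGamma (L + 2 / α) ξ) /
    Real.Gamma L

open MeasureTheory Set in
lemma lig_eq_setIntegral (s : ℝ) {x : ℝ} (hx : 0 ≤ x) :
    lowerIncompleteGamma s x = ∫ t in Ioc (0:ℝ) x, t ^ (s - 1) * Real.exp (-t) := by
  rw [lowerIncompleteGamma, intervalIntegral.integral_of_le hx]

open MeasureTheory Set in
lemma gamma_integrand_comm {s : ℝ} (hs : 0 < s) :
    IntegrableOn (fun t : ℝ => t ^ (s - 1) * Real.exp (-t)) (Ioi 0) := by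
  have := Real.GammaIntegral_convergent hs
  exact this.congr_fun (fun t _ => mul_comm _ _) measurableSet_Ioi

open MeasureTheory Set in
lemma Gamma_eq_integral' {s : ℝ} (hs : 0 < s) :
    Real.Gamma s = ∫ t in Ioi (0:ℝ), t ^ (s - 1) * Real.exp (-t) := by
  rw [Real.Gamma_eq_integral hs]
  exact setIntegral_congr_fun measurableSet_Ioi (fun t _ => mul_comm _ _)

open MeasureTheory Set in
lemma Gamma_sub_lig {s : ℝ} (hs : 0 < s) {x : ℝ} (hx : 0 ≤ x) :
    Real.Gamma s - lowerIncompleteGamma s x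
      = ∫ t in Ioi x, t ^ (s - 1) * Real.exp (-t) := by
  have hint := gamma_integrand_comm hs
  have hsplit : (Ioc (0:ℝ) x) ∪ Ioi x = Ioi 0 := Ioc_union_Ioi_eq_Ioi hx
  rw [Gamma_eq_integral' hs, lig_eq_setIntegral s hx, ← hsplit,
    setIntegral_union Ioc_disjoint_Ioi_same measurableSet_Ioi
      (hint.mono_set (by rw [← hsplit]; exact subset_union_left))
      (hint.mono_set (by rw [← hsplit]; exact subset_union_right))]
  ring

open MeasureTheory Set in
lemma lig_tendsto {s : ℝ} (hs : 0 < s) :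
    Tendsto (fun x => lowerIncompleteGamma s x) atTop (nhds (Real.Gamma s)) := by
  rw [Gamma_eq_integral' hs]
  exact intervalIntegral_tendsto_integral_Ioi 0 (gamma_integrand_comm hs) tendsto_id

open MeasureTheory Set in
/-- **Corollary 1**, large-`ξ` scaling: `(1 − P_out(ξ))·ξ^{2/α} → Γ(L+2/α)/Γ(L)` as `ξ → ∞`. -/
theorem outage_probability_large_xi_scaling (L α : ℝ) (hL : 0 < L) (hα : 0 < α) :
    Tendsto (fun ξ : ℝ => (1 - Pout L α ξ) * ξ ^ (2 / α)) atTop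
      (nhds (Real.Gamma (L + 2 / α) / Real.Gamma L)) := by
  have hβ : 0 < 2 / α := by positivity
  have hL' : 0 < L + 2 / α := by linarith
  have hG : 0 < Real.Gamma L := Real.Gamma_pos_of_pos hL
  -- tail term tends to 0
  have htail : Tendsto (fun ξ : ℝ => (Real.Gamma L - lowerIncompleteGamma L ξ) * ξ ^ (2 / α))
      atTop (nhds 0) := by
    have hup : Tendsto (fun ξ : ℝ => Real.Gamma (L + 2 / α) - lowerIncompleteGamma (L + 2 / α) ξ)
        atTop (nhds 0) := by
      have := (lig_tendsto hL').const_sub (Real.Gamma (L + 2 / α))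
      simpa using this
    refine tendsto_of_tendsto_of_tendsto_of_le_of_le' tendsto_const_nhds hup ?_ ?_
    · filter_upwards [eventually_ge_atTop (0:ℝ)] with ξ hξ
      have h1 : 0 ≤ Real.Gamma L - lowerIncompleteGamma L ξ := by
        rw [Gamma_sub_lig hL hξ]
        refine setIntegral_nonneg measurableSet_Ioi (fun t ht => ?_)
        have ht0 : 0 ≤ t := le_of_lt (lt_of_le_of_lt hξ ht)
        positivity
      positivity
    · filter_upwards [eventually_ge_atTop (1:ℝ)] with ξ hξ
      have hξ0 : (0:ℝ) ≤ ξ := by linarith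
      rw [Gamma_sub_lig hL hξ0, Gamma_sub_lig hL' hξ0, ← integral_mul_const]
      refine setIntegral_mono_on
        (((gamma_integrand_comm hL).mono_set (Ioi_subset_Ioi hξ0)).mul_const _)
        ((gamma_integrand_comm hL').mono_set (Ioi_subset_Ioi hξ0))
        measurableSet_Ioi (fun t ht => ?_)
      have ht1 : (1:ℝ) ≤ t := le_trans hξ (le_of_lt ht)
      have ht0 : (0:ℝ) < t := lt_of_lt_of_le one_pos ht1
      have : ξ ^ (2 / α) ≤ t ^ (2 / α) :=
        Real.rpow_le_rpow hξ0 (le_of_lt ht) (le_of_lt hβ)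
      calc t ^ (L - 1) * Real.exp (-t) * ξ ^ (2 / α)
          ≤ t ^ (L - 1) * Real.exp (-t) * t ^ (2 / α) := by
            refine mul_le_mul_of_nonneg_left this (by positivity)
        _ = t ^ (L + 2 / α - 1) * Real.exp (-t) := by
            rw [mul_right_comm, ← Real.rpow_add ht0]; ring_nf
  -- main decomposition
  have hmain : Tendsto (fun ξ : ℝ =>
      (Real.Gamma L - lowerIncompleteGamma L ξ) * ξ ^ (2 / α) / Real.Gamma L
        + lowerIncompleteGamma (L + 2 / α) ξ / Real.Gamma L) atTop
      (nhds (Real.Gamma (L + 2 / α) / Real.Gamma L)) := by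
    have := (htail.div_const (Real.Gamma L)).add ((lig_tendsto hL').div_const (Real.Gamma L))
    simpa using this
  refine hmain.congr' ?_
  filter_upwards [eventually_gt_atTop (0:ℝ)] with ξ hξ
  have hpow : ξ ^ (-(2 / α)) * ξ ^ (2 / α) = 1 := by
    rw [← Real.rpow_add hξ]; simp
  have h1 : 1 - Pout L α ξ = ((Real.Gamma L - lowerIncompleteGamma L ξ)
      + ξ ^ (-(2 / α)) * lowerIncompleteGamma (L + 2 / α) ξ) / Real.Gamma L := by
    rw [Pout, eq_div_iff hG.ne', sub_mul, one_mul, div_mul_cancel₀ _ hG.ne']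
    ring
  rw [h1, div_mul_eq_mul_div, add_mul, ← add_div]
  congr 1
  rw [mul_comm (ξ ^ (-(2 / α))) (lowerIncompleteGamma (L + 2 / α) ξ), mul_assoc, hpow, mul_one]
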